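/- Let n ≥ 1 and let J be an index set. With the free groups G_m^{*J} and face homomorphisms d_t as defined, the image under d_0 : G_{n+1}^{*J} → G_n^{*J} of the Moore chain subgroup ⋂_{k=1}^{n+1} ker(d_k : G_{n+1}^{*J} → G_n^{*J}) equals the Moore cycle subgroup ⋂_{k=0}^{n} ker(d_k : G_n^{*J} → G_{n-1}^{*J}); that is, every Moore cycle in degree n is a Moore boundary, and both equal R[{1, 2, …, n+1}]. -/

import Mathlib

/-- The index set of pairs `(i, j)` with `1 ≤ i < j ≤ m`. -/
abbrev PairIdx (m : ℕ) : Type :=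
  {p : ℕ × ℕ // 1 ≤ p.1 ∧ p.1 < p.2 ∧ p.2 ≤ m}

/-- The free group `G_n^{*J}` on the generators `x_{i,j}(α)`, `1 ≤ i < j ≤ n+1`, `α ∈ J`. -/
abbrev FreeGp (n : ℕ) (J : Type) : Type :=
  FreeGroup (PairIdx (n + 1) × J)

/-- The face homomorphism `d_t : G_n^{*J} → G_{n-1}^{*J}` (for `0 ≤ t ≤ n`), defined on the
generators by the formulas: `d_t x_{i,j}(α) = x_{i-1,j-1}(α)` if `t+1 < i`; ` = 1` if `t+1 = i`
or `t+1 = j`; `= x_{i,j-1}(α)` if `i < t+1 < j`; `= x_{i,j}(α)` if `t+1 > j`. -/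
def faceMap (n : ℕ) (J : Type) (t : Fin (n + 1)) :
    FreeGroup (PairIdx (n + 1) × J) →* FreeGroup (PairIdx n × J) :=
  FreeGroup.lift fun q =>
    if h1 : (t : ℕ) + 1 < q.1.1.1 then
      FreeGroup.of (⟨(q.1.1.1 - 1, q.1.1.2 - 1), by
        have hp := q.1.2; have ht := t.isLt; omega⟩, q.2)
    else if h2 : (t : ℕ) + 1 = q.1.1.1 then 1
    else if h3 : (t : ℕ) + 1 < q.1.1.2 then
      FreeGroup.of (⟨(q.1.1.1, q.1.1.2 - 1), by
        have hp := q.1.2; have ht := t.isLt; omega⟩, q.2)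
    else if h4 : (t : ℕ) + 1 = q.1.1.2 then 1
    else FreeGroup.of (⟨(q.1.1.1, q.1.1.2), by
        have hp := q.1.2; have ht := t.isLt; omega⟩, q.2)

/-- The normal closure `R_{i,j}` in `G_n^{*J}` of the set `{x_{i,j}(α) : α ∈ J}`,
for a pair `p = (i, j)` with `1 ≤ i < j ≤ n+1`. -/
def Rpair (n : ℕ) (J : Type) (p : PairIdx (n + 1)) : Subgroup (FreeGp n J) :=
  Subgroup.normalClosure (Set.range fun α : J => FreeGroup.of (p, α))

/-- The left-normed iterated commutator subgroup `[[…[[H₁, H₂], H₃], …], H_m]` of a list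
of subgroups; a singleton list gives the subgroup itself. -/
def iteratedCommutator {G : Type*} [Group G] : List (Subgroup G) → Subgroup G
  | [] => ⊥
  | H :: L => L.foldl (fun A B => ⁅A, B⁆) H

/-- The set of indices occurring among the entries of a list of pairs. -/
def pairsUnion {m : ℕ} (L : List (PairIdx m)) : Set ℕ :=
  {k | ∃ p ∈ L, k = p.1.1 ∨ k = p.1.2}

/-- `R[T]`: the join of all left-normed iterated commutator subgroups
`[[…[[R_{i₁,j₁}, R_{i₂,j₂}], …], R_{i_t,j_t}]` over nonempty finite sequences of pairs such that
every element of `T` occurs among the indices `i₁, j₁, …, i_t, j_t`. -/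
def RT (n : ℕ) (J : Type) (T : Set ℕ) : Subgroup (FreeGp n J) :=
  ⨆ (L : List (PairIdx (n + 1))) (_ : L ≠ []) (_ : T ⊆ pairsUnion L),
    iteratedCommutator (L.map (Rpair n J))


set_option maxHeartbeats 1000000
open scoped commutatorElement

section GenericGroup

variable {G : Type*} [Group G]

theorem normal_iSup' {ι : Sort*} (N : ι → Subgroup G) (h : ∀ i, (N i).Normal) :
    (⨆ i, N i).Normal := by
  constructor
  intro x hx g
  refine Subgroup.iSup_induction N (C := fun y => g * y * g⁻¹ ∈ ⨆ i, N i) hx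
    (fun i y hy => Subgroup.mem_iSup_of_mem i ((h i).conj_mem y hy g))
    (by simpa using (⨆ i, N i).one_mem) ?_
  intro a b ha hb
  have hab : g * (a * b) * g⁻¹ = (g * a * g⁻¹) * (g * b * g⁻¹) := by group
  rw [hab]; exact mul_mem ha hb

theorem commutator_mul_left_expand (x y b : G) : ⁅x * y, b⁆ = x * ⁅y, b⁆ * x⁻¹ * ⁅x, b⁆ := by
  simp only [commutatorElement_def]; group

theorem commutator_iSup_le_left {ι : Sort*} (A : ι → Subgroup G) (B D : Subgroup G)
    (hD : D.Normal) (h : ∀ i, ⁅A i, B⁆ ≤ D) : ⁅⨆ i, A i, B⁆ ≤ D := by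
  rw [Subgroup.commutator_le]
  intro x hx b hb
  refine Subgroup.iSup_induction A (C := fun x => ⁅x, b⁆ ∈ D) hx
    (fun i a ha => (Subgroup.commutator_le.mp (h i)) a ha b hb)
    (by simpa using D.one_mem) ?_
  intro u v hu hv
  rw [commutator_mul_left_expand u v b]
  exact mul_mem (hD.conj_mem _ hv u) hu

theorem commutator_iSup_le_right {ι : Sort*} (A : ι → Subgroup G) (B D : Subgroup G)
    (hD : D.Normal) (h : ∀ i, ⁅B, A i⁆ ≤ D) : ⁅B, ⨆ i, A i⁆ ≤ D := by
  rw [Subgroup.commutator_comm]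
  exact commutator_iSup_le_left A B D hD fun i => (Subgroup.commutator_comm (A i) B) ▸ h i

theorem three_subgroups_le {A B C D : Subgroup G} (hD : D.Normal)
    (h1 : ⁅⁅B, C⁆, A⁆ ≤ D) (h2 : ⁅⁅C, A⁆, B⁆ ≤ D) : ⁅⁅A, B⁆, C⁆ ≤ D := by
  haveI := hD
  set π := QuotientGroup.mk' D with hπ
  have key : ∀ X Y Z : Subgroup G, ⁅⁅X, Y⁆, Z⁆ ≤ D →
      ⁅⁅Subgroup.map π X, Subgroup.map π Y⁆, Subgroup.map π Z⁆ = ⊥ := by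
    intro X Y Z h
    rw [← Subgroup.map_commutator, ← Subgroup.map_commutator, eq_bot_iff]
    rintro _ ⟨y, hy, rfl⟩
    simp only [Subgroup.mem_bot, QuotientGroup.mk'_apply]
    exact (QuotientGroup.eq_one_iff y).mpr (h hy)
  have h3 := Subgroup.commutator_commutator_eq_bot_of_rotate (key B C A h1) (key C A B h2)
  intro x hx
  have hx' : π x ∈ (⊥ : Subgroup (G ⧸ D)) := by
    rw [← h3, ← Subgroup.map_commutator, ← Subgroup.map_commutator]
    exact ⟨x, hx, rfl⟩
  rw [Subgroup.mem_bot, QuotientGroup.mk'_apply] at hx'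
  exact (QuotientGroup.eq_one_iff x).mp hx'

theorem commutator_conj_left' (a b c : G) (h : Commute a c) :
    ⁅a * b, c⁆ = a * ⁅b, c⁆ * a⁻¹ := by
  have h' : a⁻¹ * c⁻¹ = c⁻¹ * a⁻¹ := (h.inv_inv).eq
  simp only [commutatorElement_def, mul_inv_rev, mul_assoc]
  rw [h']

theorem commutator_conj_right' (b c d : G) (h : Commute c b) :
    ⁅b, c * d⁆ = c * ⁅b, d⁆ * c⁻¹ := by
  have h' : b * c = c * b := h.symm.eq
  simp only [commutatorElement_def, mul_inv_rev, mul_assoc]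
  rw [← mul_assoc b c, h', mul_assoc]

theorem key_comm (β b' σ t' : G)
    (h1 : Commute β σ) (h2 : Commute β t') (h3 : Commute β ⁅b', t'⁆)
    (h4 : Commute σ b') (h5 : Commute σ ⁅b', t'⁆) :
    ⁅β * b', σ * t'⁆ = ⁅b', t'⁆ := by
  rw [commutator_conj_left' β b' (σ * t') (h1.mul_right h2)]
  rw [commutator_conj_right' b' σ t' h4]
  rw [h5.eq, mul_assoc ⁅b', t'⁆ σ, mul_inv_cancel, mul_one]
  rw [h3.eq, mul_assoc ⁅b', t'⁆ β, mul_inv_cancel, mul_one]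

end GenericGroup
section Lists

variable {G : Type*} [Group G]

theorem iteratedCommutator_singleton (H : Subgroup G) : iteratedCommutator [H] = H := rfl

theorem iteratedCommutator_snoc (Ms : List (Subgroup G)) (K : Subgroup G) (h : Ms ≠ []) :
    iteratedCommutator (Ms ++ [K]) = ⁅iteratedCommutator Ms, K⁆ := by
  cases Ms with
  | nil => exact absurd rfl h
  | cons H L => simp [iteratedCommutator, List.foldl_append]

theorem foldl_commutator_normal :
    ∀ (Ms : List (Subgroup G)) (A : Subgroup G), A.Normal → (∀ H ∈ Ms, H.Normal) →
      (Ms.foldl (fun A B => ⁅A, B⁆) A).Normal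
  | [], A, hA, _ => hA
  | H :: L, A, hA, hM => by
    haveI := hA
    haveI := hM H (by simp)
    exact foldl_commutator_normal L ⁅A, H⁆ (Subgroup.commutator_normal A H)
      (fun K hK => hM K (by simp [hK]))

theorem iteratedCommutator_normal (Ms : List (Subgroup G)) (hM : ∀ H ∈ Ms, H.Normal) :
    (iteratedCommutator Ms).Normal := by
  cases Ms with
  | nil =>
    show (⊥ : Subgroup G).Normal
    infer_instance
  | cons H L =>
    exact foldl_commutator_normal L H (hM H (by simp)) (fun K hK => hM K (by simp [hK]))

theorem foldl_commutator_le (K : Subgroup G) (hK : K.Normal) :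
    ∀ (Ms : List (Subgroup G)) (A : Subgroup G), (A ≤ K ∨ ∃ H ∈ Ms, H ≤ K) →
      Ms.foldl (fun A B => ⁅A, B⁆) A ≤ K
  | [], A, h => by
    rcases h with h | ⟨H, hH, _⟩
    · exact h
    · simp at hH
  | H :: L, A, h => by
    haveI := hK
    apply foldl_commutator_le K hK L ⁅A, H⁆
    rcases h with h | ⟨H', hH', hle⟩
    · exact Or.inl ((Subgroup.commutator_mono h le_rfl).trans (Subgroup.commutator_le_left K H))
    · rcases List.mem_cons.mp hH' with rfl | hmem
      · exact Or.inl ((Subgroup.commutator_mono le_rfl hle).trans (Subgroup.commutator_le_right A K))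
      · exact Or.inr ⟨H', hmem, hle⟩

theorem iteratedCommutator_le {K : Subgroup G} (hK : K.Normal) (Ms : List (Subgroup G))
    (h : ∃ H ∈ Ms, H ≤ K) : iteratedCommutator Ms ≤ K := by
  cases Ms with
  | nil => simp [iteratedCommutator]
  | cons H L =>
    apply foldl_commutator_le K hK L H
    rcases h with ⟨H', hH', hle⟩
    rcases List.mem_cons.mp hH' with rfl | hmem
    · exact Or.inl hle
    · exact Or.inr ⟨H', hmem, hle⟩

end Lists
section FaceSec

theorem of_pair_eq {m : ℕ} {J : Type} {a b a' b' : ℕ} {h : 1 ≤ (a,b).1 ∧ (a,b).1 < (a,b).2 ∧ (a,b).2 ≤ m}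
    {h' : 1 ≤ (a',b').1 ∧ (a',b').1 < (a',b').2 ∧ (a',b').2 ≤ m} {α : J}
    (ha : a = a') (hb : b = b') :
    (FreeGroup.of ((⟨(a,b),h⟩ : PairIdx m), α)) = FreeGroup.of ((⟨(a',b'),h'⟩ : PairIdx m), α) := by
  subst ha; subst hb; rfl

def insPair {m : ℕ} (c : ℕ) (p : PairIdx m) : PairIdx (m + 1) :=
  ⟨(if c ≤ p.1.1 then p.1.1 + 1 else p.1.1, if c ≤ p.1.2 then p.1.2 + 1 else p.1.2), by
    obtain ⟨h1, h2, h3⟩ := p.2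
    refine ⟨?_, ?_, ?_⟩ <;> (dsimp only; split_ifs <;> omega)⟩

def secHom (m : ℕ) (J : Type) (c : ℕ) :
    FreeGroup (PairIdx m × J) →* FreeGroup (PairIdx (m + 1) × J) :=
  FreeGroup.map (fun q => (insPair c q.1, q.2))

theorem secHom_of {m : ℕ} {J : Type} {c : ℕ} (q : PairIdx m × J) :
    secHom m J c (FreeGroup.of q) = FreeGroup.of (insPair c q.1, q.2) :=
  FreeGroup.map.of

theorem face_sec (n : ℕ) (J : Type) (t : Fin (n + 1)) (x : FreeGroup (PairIdx n × J)) :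
    faceMap n J t (secHom n J ((t : ℕ) + 1) x) = x := by
  have h : (faceMap n J t).comp (secHom n J ((t : ℕ) + 1)) = MonoidHom.id _ := by
    apply FreeGroup.ext_hom
    rintro ⟨⟨⟨i, j⟩, hp⟩, α⟩
    have h1 : 1 ≤ i := hp.1
    have h2 : i < j := hp.2.1
    have h3 : j ≤ n := hp.2.2
    have ht : (t : ℕ) < n + 1 := t.isLt
    simp only [MonoidHom.comp_apply, MonoidHom.id_apply, secHom, FreeGroup.map.of, insPair,
      faceMap, FreeGroup.lift_apply_of]
    split_ifs <;> first | rfl | (apply of_pair_eq <;> omega) | (exfalso; omega)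
  have := DFunLike.congr_fun h x
  simpa using this

theorem face_sec_comm (n : ℕ) (J : Type) (k : Fin (n + 1)) (x : FreeGp n J) :
    faceMap (n + 1) J k.succ (secHom (n + 1) J 1 x) = secHom n J 1 (faceMap n J k x) := by
  have h : (faceMap (n + 1) J k.succ).comp (secHom (n + 1) J 1) =
      (secHom n J 1).comp (faceMap n J k) := by
    apply FreeGroup.ext_hom
    rintro ⟨⟨⟨i, j⟩, hp⟩, α⟩
    have h1 : 1 ≤ i := hp.1
    have h2 : i < j := hp.2.1
    have h3 : j ≤ n + 1 := hp.2.2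
    have hk : (k : ℕ) < n + 1 := k.isLt
    simp only [MonoidHom.comp_apply, secHom_of, faceMap, FreeGroup.lift_apply_of, Fin.val_succ,
      insPair]
    rcases Nat.lt_trichotomy ((k : ℕ) + 1) i with hc1 | hc1 | hc1 <;>
      rcases Nat.lt_trichotomy ((k : ℕ) + 1) j with hc3 | hc3 | hc3 <;>
      repeat' (first
        | simp only [if_pos (show 1 ≤ i by omega)]
        | simp only [if_pos (show 1 ≤ j by omega)]
        | simp only [if_pos (show 1 ≤ i - 1 by omega)]
        | simp only [if_neg (show ¬(1 ≤ i - 1) by omega)]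
        | simp only [if_pos (show 1 ≤ j - 1 by omega)]
        | simp only [if_neg (show ¬(1 ≤ j - 1) by omega)]
        | simp only [dif_pos (show (k : ℕ) + 1 + 1 < i + 1 by omega)]
        | simp only [dif_neg (show ¬((k : ℕ) + 1 + 1 < i + 1) by omega)]
        | simp only [dif_pos (show (k : ℕ) + 1 + 1 = i + 1 by omega)]
        | simp only [dif_neg (show ¬((k : ℕ) + 1 + 1 = i + 1) by omega)]
        | simp only [dif_pos (show (k : ℕ) + 1 + 1 < j + 1 by omega)]
        | simp only [dif_neg (show ¬((k : ℕ) + 1 + 1 < j + 1) by omega)]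
        | simp only [dif_pos (show (k : ℕ) + 1 + 1 = j + 1 by omega)]
        | simp only [dif_neg (show ¬((k : ℕ) + 1 + 1 = j + 1) by omega)]
        | simp only [dif_pos (show (k : ℕ) + 1 < i by omega)]
        | simp only [dif_neg (show ¬((k : ℕ) + 1 < i) by omega)]
        | simp only [dif_pos (show (k : ℕ) + 1 = i by omega)]
        | simp only [dif_neg (show ¬((k : ℕ) + 1 = i) by omega)]
        | simp only [dif_pos (show (k : ℕ) + 1 < j by omega)]
        | simp only [dif_neg (show ¬((k : ℕ) + 1 < j) by omega)]
        | simp only [dif_pos (show (k : ℕ) + 1 = j by omega)]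
        | simp only [dif_neg (show ¬((k : ℕ) + 1 = j) by omega)]
        | simp only [map_one, secHom_of, insPair])
    all_goals first | rfl | (apply of_pair_eq <;> omega) | (exfalso; omega)
  have := DFunLike.congr_fun h x
  simpa using this

theorem face_face (n : ℕ) (J : Type) (k : Fin (n + 1)) (x : FreeGp (n + 1) J) :
    faceMap n J k (faceMap (n + 1) J 0 x) = faceMap n J 0 (faceMap (n + 1) J k.succ x) := by
  have h : (faceMap n J k).comp (faceMap (n + 1) J 0) =
      (faceMap n J 0).comp (faceMap (n + 1) J k.succ) := by
    apply FreeGroup.ext_hom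
    rintro ⟨⟨⟨i, j⟩, hp⟩, α⟩
    have h1 : 1 ≤ i := hp.1
    have h2 : i < j := hp.2.1
    have h3 : j ≤ n + 2 := hp.2.2
    have hk : (k : ℕ) < n + 1 := k.isLt
    simp only [MonoidHom.comp_apply, faceMap, FreeGroup.lift_apply_of, Fin.val_succ, Fin.val_zero,
      Fin.isValue, zero_add]
    split_ifs <;>
      simp -failIfUnchanged only [map_one, faceMap, FreeGroup.lift_apply_of] <;>
      first | rfl | (exfalso; omega) | (split_ifs <;> first | rfl | (apply of_pair_eq <;> omega) | (exfalso; omega))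
  have := DFunLike.congr_fun h x
  simpa using this

end FaceSec
section Retr

theorem face_of_killed (n : ℕ) (J : Type) (t : Fin (n + 1)) (i j : ℕ)
    (hp : 1 ≤ (i,j).1 ∧ (i,j).1 < (i,j).2 ∧ (i,j).2 ≤ n + 1) (α : J)
    (h : (t : ℕ) + 1 = i ∨ (t : ℕ) + 1 = j) :
    faceMap n J t (FreeGroup.of (⟨(i, j), hp⟩, α)) = 1 := by
  have h1 : 1 ≤ i := hp.1
  have h2 : i < j := hp.2.1
  simp only [faceMap, FreeGroup.lift_apply_of]
  rcases h with h | h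
  · rw [dif_neg (show ¬((t : ℕ) + 1 < i) by omega), dif_pos (show (t : ℕ) + 1 = i by omega)]
  · rw [dif_neg (show ¬((t : ℕ) + 1 < i) by omega), dif_neg (show ¬((t : ℕ) + 1 = i) by omega),
      dif_neg (show ¬((t : ℕ) + 1 < j) by omega), dif_pos (show (t : ℕ) + 1 = j by omega)]

def retr (n : ℕ) (J : Type) (t : Fin (n + 1)) : FreeGp n J →* FreeGp n J :=
  (secHom n J ((t : ℕ) + 1)).comp (faceMap n J t)

theorem retr_of_killed (n : ℕ) (J : Type) (t : Fin (n + 1)) {i j : ℕ}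
    {hp : 1 ≤ (i,j).1 ∧ (i,j).1 < (i,j).2 ∧ (i,j).2 ≤ n + 1} (α : J)
    (h : (t : ℕ) + 1 = i ∨ (t : ℕ) + 1 = j) :
    retr n J t (FreeGroup.of (⟨(i, j), hp⟩, α)) = 1 := by
  rw [retr, MonoidHom.comp_apply, face_of_killed n J t i j hp α h, map_one]

theorem retr_of_surv (n : ℕ) (J : Type) (t : Fin (n + 1)) {i j : ℕ}
    {hp : 1 ≤ (i,j).1 ∧ (i,j).1 < (i,j).2 ∧ (i,j).2 ≤ n + 1} (α : J)
    (h : ¬((t : ℕ) + 1 = i ∨ (t : ℕ) + 1 = j)) :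
    retr n J t (FreeGroup.of (⟨(i, j), hp⟩, α)) = FreeGroup.of (⟨(i, j), hp⟩, α) := by
  push_neg at h
  have h1 : 1 ≤ i := hp.1
  have h2 : i < j := hp.2.1
  have h3 : j ≤ n + 1 := hp.2.2
  have ht : (t : ℕ) < n + 1 := t.isLt
  simp only [retr, MonoidHom.comp_apply, faceMap, FreeGroup.lift_apply_of]
  rcases Nat.lt_trichotomy ((t : ℕ) + 1) i with hc1 | hc1 | hc1 <;>
    rcases Nat.lt_trichotomy ((t : ℕ) + 1) j with hc3 | hc3 | hc3 <;>
    repeat' (first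
      | simp only [dif_pos (show (t : ℕ) + 1 < i by omega)]
      | simp only [dif_neg (show ¬((t : ℕ) + 1 < i) by omega)]
      | simp only [dif_pos (show (t : ℕ) + 1 = i by omega)]
      | simp only [dif_neg (show ¬((t : ℕ) + 1 = i) by omega)]
      | simp only [dif_pos (show (t : ℕ) + 1 < j by omega)]
      | simp only [dif_neg (show ¬((t : ℕ) + 1 < j) by omega)]
      | simp only [dif_pos (show (t : ℕ) + 1 = j by omega)]
      | simp only [dif_neg (show ¬((t : ℕ) + 1 = j) by omega)]
      | simp only [secHom_of, insPair]
      | simp only [if_pos (show (t : ℕ) + 1 ≤ i - 1 by omega)]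
      | simp only [if_neg (show ¬((t : ℕ) + 1 ≤ i - 1) by omega)]
      | simp only [if_pos (show (t : ℕ) + 1 ≤ j - 1 by omega)]
      | simp only [if_neg (show ¬((t : ℕ) + 1 ≤ j - 1) by omega)]
      | simp only [if_pos (show (t : ℕ) + 1 ≤ i by omega)]
      | simp only [if_neg (show ¬((t : ℕ) + 1 ≤ i) by omega)]
      | simp only [if_pos (show (t : ℕ) + 1 ≤ j by omega)]
      | simp only [if_neg (show ¬((t : ℕ) + 1 ≤ j) by omega)])
  all_goals first | rfl | (apply of_pair_eq <;> omega) | (exfalso; omega)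

def Nsup (n : ℕ) (J : Type) (t : Fin (n + 1)) : Subgroup (FreeGp n J) :=
  ⨆ (p : {p : PairIdx (n + 1) // (t : ℕ) + 1 = p.1.1 ∨ (t : ℕ) + 1 = p.1.2}),
    Rpair n J p.1

theorem Nsup_normal (n : ℕ) (J : Type) (t : Fin (n + 1)) : (Nsup n J t).Normal :=
  normal_iSup' _ (fun _ => Subgroup.normalClosure_normal)

theorem mk_retr (n : ℕ) (J : Type) (t : Fin (n + 1)) (x : FreeGp n J) :
    haveI := Nsup_normal n J t
    (QuotientGroup.mk' (Nsup n J t)) (retr n J t x) = (QuotientGroup.mk' (Nsup n J t)) x := by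
  haveI := Nsup_normal n J t
  have h : (QuotientGroup.mk' (Nsup n J t)).comp (retr n J t) = QuotientGroup.mk' (Nsup n J t) := by
    apply FreeGroup.ext_hom
    rintro ⟨⟨⟨i, j⟩, hp⟩, α⟩
    by_cases h : (t : ℕ) + 1 = i ∨ (t : ℕ) + 1 = j
    · rw [MonoidHom.comp_apply, retr_of_killed n J t α h, map_one]
      symm
      rw [QuotientGroup.mk'_apply, QuotientGroup.eq_one_iff]
      exact Subgroup.mem_iSup_of_mem ⟨⟨(i,j),hp⟩, h⟩
        (Subgroup.subset_normalClosure ⟨α, rfl⟩)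
    · rw [MonoidHom.comp_apply, retr_of_surv n J t α h]
  exact DFunLike.congr_fun h x

theorem ker_retr_eq (n : ℕ) (J : Type) (t : Fin (n + 1)) :
    MonoidHom.ker (retr n J t) = Nsup n J t := by
  haveI := Nsup_normal n J t
  apply le_antisymm
  · intro x hx
    have h := mk_retr n J t x
    rw [MonoidHom.mem_ker.mp hx, map_one] at h
    rw [← QuotientGroup.eq_one_iff (G := FreeGp n J) x, ← QuotientGroup.mk'_apply, ← h]
  · apply iSup_le
    rintro ⟨p, hp⟩
    apply Subgroup.normalClosure_le_normal
    rintro _ ⟨α, rfl⟩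
    rw [SetLike.mem_coe, MonoidHom.mem_ker]
    obtain ⟨⟨i, j⟩, hpp⟩ := p
    exact retr_of_killed n J t α hp

theorem Rpair_le_ker_face (n : ℕ) (J : Type) (t : Fin (n + 1)) (p : PairIdx (n + 1))
    (h : (t : ℕ) + 1 = p.1.1 ∨ (t : ℕ) + 1 = p.1.2) :
    Rpair n J p ≤ MonoidHom.ker (faceMap n J t) := by
  apply Subgroup.normalClosure_le_normal
  rintro _ ⟨α, rfl⟩
  rw [SetLike.mem_coe, MonoidHom.mem_ker]
  obtain ⟨⟨i, j⟩, hpp⟩ := p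
  exact face_of_killed n J t i j hpp α h

theorem retr_eq_one_of_face (n : ℕ) (J : Type) (t : Fin (n + 1)) {x : FreeGp n J}
    (hx : faceMap n J t x = 1) : retr n J t x = 1 := by
  rw [retr, MonoidHom.comp_apply, hx, map_one]

theorem retr_mem_Rpair (n : ℕ) (J : Type) (t : Fin (n + 1)) (p : PairIdx (n + 1))
    {x : FreeGp n J} (hx : x ∈ Rpair n J p) : retr n J t x ∈ Rpair n J p := by
  haveI : ((Rpair n J p).comap (retr n J t)).Normal :=
    Subgroup.Normal.comap Subgroup.normalClosure_normal _
  suffices h : Rpair n J p ≤ (Rpair n J p).comap (retr n J t) from h hx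
  apply Subgroup.normalClosure_le_normal
  rintro _ ⟨α, rfl⟩
  rw [SetLike.mem_coe, Subgroup.mem_comap]
  obtain ⟨⟨i, j⟩, hpp⟩ := p
  by_cases h : (t : ℕ) + 1 = i ∨ (t : ℕ) + 1 = j
  · rw [retr_of_killed n J t α h]; exact Subgroup.one_mem _
  · rw [retr_of_surv n J t α h]; exact Subgroup.subset_normalClosure ⟨α, rfl⟩

end Retr
section RTsec

variable (n : ℕ) (J : Type)

def Bgp (L : List (PairIdx (n + 1))) : Subgroup (FreeGp n J) :=
  iteratedCommutator (L.map (Rpair n J))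

theorem RT_def' (T : Set ℕ) : RT n J T =
    ⨆ (L : List (PairIdx (n + 1))) (_ : L ≠ []) (_ : T ⊆ pairsUnion L), Bgp n J L := rfl

theorem Bgp_singleton (p : PairIdx (n + 1)) : Bgp n J [p] = Rpair n J p := rfl

theorem Bgp_snoc (L : List (PairIdx (n + 1))) (p : PairIdx (n + 1)) (h : L ≠ []) :
    Bgp n J (L ++ [p]) = ⁅Bgp n J L, Rpair n J p⁆ := by
  unfold Bgp
  rw [List.map_append]
  exact iteratedCommutator_snoc _ _ (by simpa using h)

theorem Bgp_normal (L : List (PairIdx (n + 1))) : (Bgp n J L).Normal := by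
  apply iteratedCommutator_normal
  rintro H hH
  rw [List.mem_map] at hH
  obtain ⟨p, _, rfl⟩ := hH
  exact Subgroup.normalClosure_normal

theorem RT_normal (T : Set ℕ) : (RT n J T).Normal := by
  rw [RT_def']
  apply normal_iSup'; intro L
  apply normal_iSup'; intro _
  apply normal_iSup'; intro _
  exact Bgp_normal n J L

theorem Bgp_le_RT {T : Set ℕ} {L : List (PairIdx (n + 1))} (h : L ≠ [])
    (hT : T ⊆ pairsUnion L) : Bgp n J L ≤ RT n J T := by
  rw [RT_def']
  exact le_iSup_of_le L (le_iSup_of_le h (le_iSup_of_le hT le_rfl))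

theorem RT_le {T : Set ℕ} {K : Subgroup (FreeGp n J)}
    (h : ∀ L, L ≠ [] → T ⊆ pairsUnion L → Bgp n J L ≤ K) : RT n J T ≤ K := by
  rw [RT_def']
  exact iSup_le fun L => iSup_le fun hL => iSup_le fun hT => h L hL hT

theorem RT_anti {T T' : Set ℕ} (h : T ⊆ T') : RT n J T' ≤ RT n J T :=
  RT_le n J fun L hL hT' => Bgp_le_RT n J hL (h.trans hT')

theorem pairsUnion_append {m : ℕ} (L M : List (PairIdx m)) :
    pairsUnion (L ++ M) = pairsUnion L ∪ pairsUnion M := by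
  ext x
  simp only [pairsUnion, Set.mem_setOf_eq, List.mem_append, Set.mem_union]
  constructor
  · rintro ⟨p, (h | h), hx⟩
    · exact Or.inl ⟨p, h, hx⟩
    · exact Or.inr ⟨p, h, hx⟩
  · rintro (⟨p, h, hx⟩ | ⟨p, h, hx⟩)
    · exact ⟨p, Or.inl h, hx⟩
    · exact ⟨p, Or.inr h, hx⟩

theorem pairsUnion_single {m : ℕ} (p : PairIdx m) :
    pairsUnion [p] = {p.1.1, p.1.2} := by
  ext x
  simp [pairsUnion, Set.mem_insert_iff, Set.mem_singleton_iff]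

theorem mem_pairsUnion_single {m : ℕ} {p : PairIdx m} {x : ℕ}
    (h : x = p.1.1 ∨ x = p.1.2) : x ∈ pairsUnion [p] :=
  ⟨p, by simp, h⟩

theorem commutator_RT_left {S : Set ℕ} {K D : Subgroup (FreeGp n J)} (hD : D.Normal)
    (h : ∀ L, L ≠ [] → S ⊆ pairsUnion L → ⁅Bgp n J L, K⁆ ≤ D) : ⁅RT n J S, K⁆ ≤ D := by
  rw [RT_def']
  apply commutator_iSup_le_left _ _ _ hD; intro L
  apply commutator_iSup_le_left _ _ _ hD; intro hL
  apply commutator_iSup_le_left _ _ _ hD; intro hT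
  exact h L hL hT

theorem commutator_RT_right {S : Set ℕ} {K D : Subgroup (FreeGp n J)} (hD : D.Normal)
    (h : ∀ L, L ≠ [] → S ⊆ pairsUnion L → ⁅K, Bgp n J L⁆ ≤ D) : ⁅K, RT n J S⁆ ≤ D := by
  rw [RT_def']
  apply commutator_iSup_le_right _ _ _ hD; intro L
  apply commutator_iSup_le_right _ _ _ hD; intro hL
  apply commutator_iSup_le_right _ _ _ hD; intro hT
  exact h L hL hT

theorem commutator_RT_Rpair {S : Set ℕ} (p : PairIdx (n + 1)) :
    ⁅RT n J S, Rpair n J p⁆ ≤ RT n J (S ∪ {p.1.1, p.1.2}) := by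
  apply commutator_RT_left n J (RT_normal n J _)
  intro L hL hS
  rw [← Bgp_snoc n J L p hL]
  apply Bgp_le_RT n J (by simp)
  rw [pairsUnion_append]
  rintro x (hx | hx)
  · exact Or.inl (hS hx)
  · refine Or.inr (mem_pairsUnion_single ?_)
    rcases hx with hx | hx
    · exact Or.inl hx
    · exact Or.inr hx

theorem commutator_Bgp_Bgp (L₂ : List (PairIdx (n + 1))) :
    ∀ L₁ : List (PairIdx (n + 1)), L₁ ≠ [] → L₂ ≠ [] →
      ⁅Bgp n J L₁, Bgp n J L₂⁆ ≤ RT n J (pairsUnion L₁ ∪ pairsUnion L₂) := by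
  induction L₂ using List.reverseRecOn with
  | nil => intro L₁ _ h; exact absurd rfl h
  | append_singleton L p ih =>
    intro L₁ hL₁ _
    rcases eq_or_ne L [] with rfl | hL
    · simp only [List.nil_append]
      rw [Bgp_singleton, ← Bgp_snoc n J L₁ p hL₁]
      apply Bgp_le_RT n J (by simp)
      rw [pairsUnion_append]
    · rw [Bgp_snoc n J L p hL, Subgroup.commutator_comm]
      apply three_subgroups_le (RT_normal n J _)
      · rw [Subgroup.commutator_comm (Rpair n J p), ← Bgp_snoc n J L₁ p hL₁]
        refine (ih (L₁ ++ [p]) (by simp) hL).trans (RT_anti n J ?_)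
        rw [pairsUnion_append, pairsUnion_append]
        intro x hx
        simp only [Set.mem_union] at hx ⊢
        tauto
      · refine ((Subgroup.commutator_mono (ih L₁ hL₁ hL) (le_refl (Rpair n J p))).trans
          (commutator_RT_Rpair n J p)).trans (RT_anti n J ?_)
        rw [pairsUnion_append, pairsUnion_single]
        intro x hx
        simp only [Set.mem_union] at hx ⊢
        tauto

theorem commutator_RT_RT (S₁ S₂ : Set ℕ) :
    ⁅RT n J S₁, RT n J S₂⁆ ≤ RT n J (S₁ ∪ S₂) := by
  apply commutator_RT_left n J (RT_normal n J _)
  intro L₁ h₁ hS₁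
  apply commutator_RT_right n J (RT_normal n J _)
  intro L₂ h₂ hS₂
  exact (commutator_Bgp_Bgp n J L₂ L₁ h₁ h₂).trans
    (RT_anti n J (Set.union_subset_union hS₁ hS₂))

theorem retr_mem_Bgp (t : Fin (n + 1)) (L : List (PairIdx (n + 1))) {x : FreeGp n J}
    (hx : x ∈ Bgp n J L) : retr n J t x ∈ Bgp n J L := by
  induction L using List.reverseRecOn generalizing x with
  | nil =>
    have : x = 1 := by simpa [Bgp, iteratedCommutator] using hx
    subst this
    simp only [map_one]
    exact Subgroup.one_mem _
  | append_singleton L p ih =>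
    rcases eq_or_ne L [] with rfl | hL
    · exact retr_mem_Rpair n J t p hx
    · rw [Bgp_snoc n J L p hL] at hx ⊢
      revert x
      have : ⁅Bgp n J L, Rpair n J p⁆ ≤ Subgroup.comap (retr n J t) ⁅Bgp n J L, Rpair n J p⁆ := by
        apply Subgroup.commutator_le.mpr
        intro b hb r hr
        rw [Subgroup.mem_comap, map_commutatorElement]
        exact Subgroup.commutator_mem_commutator (ih hb) (retr_mem_Rpair n J t p hr)
      intro x hx
      exact this hx

end RTsec
section Good

theorem commute_mk {G : Type*} [Group G] {M : Subgroup G} (hM : M.Normal) {x y : G}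
    (h : ⁅x, y⁆ ∈ M) :
    haveI := hM
    Commute (QuotientGroup.mk x : G ⧸ M) (QuotientGroup.mk y) := by
  haveI := hM
  rw [← commutatorElement_eq_one_iff_commute]
  have h2 := map_commutatorElement (QuotientGroup.mk' M) x y
  rw [QuotientGroup.mk'_apply, QuotientGroup.mk'_apply, QuotientGroup.mk'_apply] at h2
  rw [← h2]
  exact (QuotientGroup.eq_one_iff _).mpr h

theorem retr_idem (n : ℕ) (J : Type) (t : Fin (n + 1)) (x : FreeGp n J) :
    retr n J t (retr n J t x) = retr n J t x := by
  simp only [retr, MonoidHom.comp_apply, face_sec]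

def good (n : ℕ) (J : Type) (t : Fin (n + 1)) (M : Subgroup (FreeGp n J)) (hM : M.Normal) :
    Subgroup (FreeGp n J) where
  carrier := {w | (retr n J t w)⁻¹ * w ∈ M}
  one_mem' := by
    simp only [Set.mem_setOf_eq, map_one, inv_one, one_mul]
    exact M.one_mem
  mul_mem' := by
    intro x y hx hy
    simp only [Set.mem_setOf_eq] at hx hy ⊢
    have e : (retr n J t (x * y))⁻¹ * (x * y) =
        ((retr n J t y)⁻¹ * y) * (y⁻¹ * ((retr n J t x)⁻¹ * x) * y) := by
      rw [map_mul]; group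
    rw [e]
    refine mul_mem hy ?_
    simpa using hM.conj_mem _ hx y⁻¹
  inv_mem' := by
    intro x hx
    simp only [Set.mem_setOf_eq] at hx ⊢
    have e : (retr n J t x⁻¹)⁻¹ * x⁻¹ = x * ((retr n J t x)⁻¹ * x)⁻¹ * x⁻¹ := by
      rw [map_inv]; group
    rw [e]
    exact hM.conj_mem _ (inv_mem hx) x

theorem mem_good {n : ℕ} {J : Type} {t : Fin (n + 1)} {M : Subgroup (FreeGp n J)}
    {hM : M.Normal} {w : FreeGp n J} :
    w ∈ good n J t M hM ↔ (retr n J t w)⁻¹ * w ∈ M := Iff.rfl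

theorem good_mono {n : ℕ} {J : Type} {t : Fin (n + 1)} {M M' : Subgroup (FreeGp n J)}
    {hM : M.Normal} {hM' : M'.Normal} (h : M ≤ M') :
    good n J t M hM ≤ good n J t M' hM' := fun _ hz => h hz

theorem lemmaA_single (n : ℕ) (J : Type) (t : Fin (n + 1)) (p : PairIdx (n + 1)) :
    Rpair n J p ≤ good n J t (RT n J (pairsUnion [p] ∪ {(t : ℕ) + 1})) (RT_normal n J _) := by
  have hMn : (RT n J (pairsUnion [p] ∪ {(t : ℕ) + 1})).Normal := RT_normal n J _
  have hcomm : ⁅Rpair n J p, Nsup n J t⁆ ≤ RT n J (pairsUnion [p] ∪ {(t : ℕ) + 1}) := by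
    apply commutator_iSup_le_right _ _ _ hMn
    rintro ⟨q, hq⟩
    rw [show Rpair n J p = Bgp n J [p] from rfl, ← Bgp_snoc n J [p] q (by simp)]
    apply Bgp_le_RT n J (by simp)
    rw [pairsUnion_append]
    rintro x (hx | hx)
    · exact Or.inl hx
    · rw [Set.mem_singleton_iff] at hx; subst hx
      exact Or.inr (mem_pairsUnion_single hq)
  rw [Rpair, Subgroup.normalClosure]
  apply (Subgroup.closure_le _).mpr
  intro x hx
  have hxR : x ∈ Rpair n J p := Subgroup.conjugatesOfSet_subset_normalClosure hx
  rw [Group.mem_conjugatesOfSet_iff] at hx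
  obtain ⟨y, ⟨α, rfl⟩, hconj⟩ := hx
  obtain ⟨g, hg⟩ := isConj_iff.mp hconj
  obtain ⟨⟨i, j⟩, hpp⟩ := p
  by_cases hk : (t : ℕ) + 1 = i ∨ (t : ℕ) + 1 = j
  · have hr : retr n J t x = 1 := by
      rw [← hg, map_mul, map_mul, map_inv, retr_of_killed n J t α hk]
      group
    rw [SetLike.mem_coe, mem_good, hr, inv_one, one_mul]
    refine Bgp_le_RT n J (L := [⟨(i, j), hpp⟩]) (by simp) ?_ hxR
    rintro z (hz | hz)
    · exact hz
    · rw [Set.mem_singleton_iff] at hz; subst hz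
      exact mem_pairsUnion_single hk
  · have hy := retr_of_surv n J t (hp := hpp) α hk
    rw [SetLike.mem_coe, mem_good]
    have e : (retr n J t x)⁻¹ * x =
        (retr n J t g) * ⁅(FreeGroup.of ((⟨(i, j), hpp⟩ : PairIdx (n + 1)), α))⁻¹,
          (retr n J t g)⁻¹ * g⁆ * (retr n J t g)⁻¹ := by
      rw [← hg, map_mul, map_mul, map_inv, hy, commutatorElement_def]
      group
    rw [e]
    apply hMn.conj_mem
    apply hcomm
    apply Subgroup.commutator_mem_commutator
    · exact inv_mem (Subgroup.subset_normalClosure ⟨α, rfl⟩)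
    · rw [← ker_retr_eq n J t, MonoidHom.mem_ker, map_mul, map_inv, retr_idem]
      group

theorem lemmaA (n : ℕ) (J : Type) (t : Fin (n + 1)) :
    ∀ L : List (PairIdx (n + 1)), L ≠ [] →
      Bgp n J L ≤ good n J t (RT n J (pairsUnion L ∪ {(t : ℕ) + 1})) (RT_normal n J _) := by
  intro L
  induction L using List.reverseRecOn with
  | nil => intro h; exact absurd rfl h
  | append_singleton L p ih =>
    intro _
    rcases eq_or_ne L [] with rfl | hL
    · simpa [Bgp_singleton] using lemmaA_single n J t p
    · rw [Bgp_snoc n J L p hL]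
      have hMn : (RT n J (pairsUnion (L ++ [p]) ∪ {(t : ℕ) + 1})).Normal := RT_normal n J _
      haveI := hMn
      apply Subgroup.commutator_le.mpr
      intro b hb r hr
      have hβ : b * (retr n J t b)⁻¹ ∈ RT n J (pairsUnion L ∪ {(t : ℕ) + 1}) :=
        (RT_normal n J _).mem_comm (ih hL hb)
      have hσ : r * (retr n J t r)⁻¹ ∈ RT n J (pairsUnion [p] ∪ {(t : ℕ) + 1}) :=
        (RT_normal n J _).mem_comm (lemmaA_single n J t p hr)
      have hb' : retr n J t b ∈ Bgp n J L := retr_mem_Bgp n J t L hb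
      have hr' : retr n J t r ∈ Rpair n J p := retr_mem_Rpair n J t p hr
      have hb'' : retr n J t b ∈ RT n J (pairsUnion L) :=
        Bgp_le_RT n J hL (subset_refl _) hb'
      have hr'' : retr n J t r ∈ RT n J (pairsUnion [p]) :=
        Bgp_le_RT n J (L := [p]) (by simp) (subset_refl _) hr'
      have hc : ⁅retr n J t b, retr n J t r⁆ ∈ RT n J (pairsUnion (L ++ [p])) := by
        refine Bgp_le_RT n J (by simp) (subset_refl _) ?_
        rw [Bgp_snoc n J L p hL]
        exact Subgroup.commutator_mem_commutator hb' hr'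
      have hcc : ∀ {u v : FreeGp n J} {S₁ S₂ : Set ℕ}, u ∈ RT n J S₁ → v ∈ RT n J S₂ →
          (pairsUnion (L ++ [p]) ∪ {(t : ℕ) + 1} ⊆ S₁ ∪ S₂) →
          ⁅u, v⁆ ∈ RT n J (pairsUnion (L ++ [p]) ∪ {(t : ℕ) + 1}) := by
        intro u v S₁ S₂ hu hv hsub
        exact ((commutator_RT_RT n J S₁ S₂).trans (RT_anti n J hsub))
          (Subgroup.commutator_mem_commutator hu hv)
      have k1 := commute_mk hMn (hcc hβ hσ (by
        intro z hz
        simp only [pairsUnion_append, Set.mem_union, Set.mem_singleton_iff] at hz ⊢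
        tauto))
      have k2 := commute_mk hMn (hcc hβ hr'' (by
        intro z hz
        simp only [pairsUnion_append, Set.mem_union, Set.mem_singleton_iff] at hz ⊢
        tauto))
      have k3 := commute_mk hMn (hcc hβ hc (by
        intro z hz
        simp only [pairsUnion_append, Set.mem_union, Set.mem_singleton_iff] at hz ⊢
        tauto))
      have k4 := commute_mk hMn (hcc hσ hb'' (by
        intro z hz
        simp only [pairsUnion_append, Set.mem_union, Set.mem_singleton_iff] at hz ⊢
        tauto))
      have k5 := commute_mk hMn (hcc hσ hc (by
        intro z hz
        simp only [pairsUnion_append, Set.mem_union, Set.mem_singleton_iff] at hz ⊢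
        tauto))
      have mkc : ∀ u v : FreeGp n J,
          (QuotientGroup.mk ⁅u, v⁆ :
            FreeGp n J ⧸ RT n J (pairsUnion (L ++ [p]) ∪ {(t : ℕ) + 1})) =
          ⁅(QuotientGroup.mk u :
            FreeGp n J ⧸ RT n J (pairsUnion (L ++ [p]) ∪ {(t : ℕ) + 1})), QuotientGroup.mk v⁆ := by
        intro u v
        have h2 := map_commutatorElement
          (QuotientGroup.mk' (RT n J (pairsUnion (L ++ [p]) ∪ {(t : ℕ) + 1}))) u v
        rw [QuotientGroup.mk'_apply, QuotientGroup.mk'_apply, QuotientGroup.mk'_apply] at h2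
        exact h2
      rw [mkc] at k3 k5
      rw [mem_good]
      have hkey := key_comm (QuotientGroup.mk (b * (retr n J t b)⁻¹)) (QuotientGroup.mk (retr n J t b))
        (QuotientGroup.mk (r * (retr n J t r)⁻¹)) (QuotientGroup.mk (retr n J t r)) k1 k2 k3 k4 k5
      rw [← QuotientGroup.mk_mul, ← QuotientGroup.mk_mul] at hkey
      rw [show (b * (retr n J t b)⁻¹) * retr n J t b = b by group] at hkey
      rw [show (r * (retr n J t r)⁻¹) * retr n J t r = r by group] at hkey
      have hfinal : (QuotientGroup.mk (retr n J t ⁅b, r⁆) :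
          FreeGp n J ⧸ RT n J (pairsUnion (L ++ [p]) ∪ {(t : ℕ) + 1})) =
          QuotientGroup.mk ⁅b, r⁆ := by
        rw [map_commutatorElement, mkc, mkc]
        exact hkey.symm
      exact QuotientGroup.eq.mp hfinal

theorem key_step (n : ℕ) (J : Type) (t : Fin (n + 1)) (T : Set ℕ) {w : FreeGp n J}
    (hw : w ∈ RT n J T) (hker : w ∈ MonoidHom.ker (faceMap n J t)) :
    w ∈ RT n J (insert ((t : ℕ) + 1) T) := by
  have hMn : (RT n J (insert ((t : ℕ) + 1) T)).Normal := RT_normal n J _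
  have hgood : RT n J T ≤ good n J t (RT n J (insert ((t : ℕ) + 1) T)) hMn := by
    apply RT_le
    intro L hL hT
    refine (lemmaA n J t L hL).trans (good_mono (RT_anti n J ?_))
    rw [Set.insert_subset_iff]
    exact ⟨Or.inr rfl, hT.trans Set.subset_union_left⟩
  have h2 : (retr n J t w)⁻¹ * w ∈ RT n J (insert ((t : ℕ) + 1) T) := hgood hw
  rwa [retr_eq_one_of_face n J t (MonoidHom.mem_ker.mp hker), inv_one, one_mul] at h2

theorem top_le_RT_empty (n : ℕ) (J : Type) (w : FreeGp n J) : w ∈ RT n J (∅ : Set ℕ) := by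
  induction w using FreeGroup.induction_on with
  | C1 => exact one_mem _
  | of q =>
    obtain ⟨p, α⟩ := q
    exact Bgp_le_RT n J (L := [p]) (by simp) (by simp)
      (Subgroup.subset_normalClosure ⟨α, rfl⟩)
  | inv_of q h => exact inv_mem h
  | mul x y hx hy => exact mul_mem hx hy

theorem inter_le (n : ℕ) (J : Type) (s : Finset (Fin (n + 1))) :
    ∀ w : FreeGp n J, (∀ k ∈ s, w ∈ MonoidHom.ker (faceMap n J k)) →
      w ∈ RT n J {m | ∃ k ∈ s, m = (k : ℕ) + 1} := by
  classical
  induction s using Finset.induction_on with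
  | empty =>
    intro w _
    have hset : {m | ∃ k ∈ (∅ : Finset (Fin (n + 1))), m = (k : ℕ) + 1} = (∅ : Set ℕ) := by
      simp
    rw [hset]
    exact top_le_RT_empty n J w
  | @insert k s hk ih =>
    intro w hw
    have h1 := ih w (fun k' hk' => hw k' (Finset.mem_insert_of_mem hk'))
    have h2 := key_step n J k _ h1 (hw k (Finset.mem_insert_self k s))
    have hset : insert ((k : ℕ) + 1) {m | ∃ k' ∈ s, m = (k' : ℕ) + 1} =
        {m | ∃ k' ∈ insert k s, m = (k' : ℕ) + 1} := by
      ext m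
      simp only [Set.mem_insert_iff, Set.mem_setOf_eq, Finset.mem_insert]
      constructor
      · rintro (rfl | ⟨k', hk', rfl⟩)
        · exact ⟨k, Or.inl rfl, rfl⟩
        · exact ⟨k', Or.inr hk', rfl⟩
      · rintro ⟨k', (rfl | hk'), rfl⟩
        · exact Or.inl rfl
        · exact Or.inr ⟨k', hk', rfl⟩
    rwa [hset] at h2

theorem part2 (n : ℕ) (J : Type) :
    (⨅ k : Fin (n + 1), MonoidHom.ker (faceMap n J k)) = RT n J (Set.Icc 1 (n + 1)) := by
  apply le_antisymm
  · intro w hw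
    have h := inter_le n J Finset.univ w (fun k _ => (Subgroup.mem_iInf.mp hw) k)
    have hset : {m | ∃ k ∈ (Finset.univ : Finset (Fin (n + 1))), m = (k : ℕ) + 1} =
        Set.Icc 1 (n + 1) := by
      ext m
      simp only [Finset.mem_univ, true_and, Set.mem_setOf_eq, Set.mem_Icc]
      constructor
      · rintro ⟨k, rfl⟩
        have := k.isLt
        omega
      · intro hm
        exact ⟨⟨m - 1, by omega⟩, by simp; omega⟩
    rwa [hset] at h
  · apply RT_le
    intro L hL hT
    rw [le_iInf_iff]
    intro k
    have hmem : ((k : ℕ) + 1) ∈ pairsUnion L := hT (by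
      simp only [Set.mem_Icc]
      have := k.isLt
      omega)
    obtain ⟨p, hpL, hp⟩ := hmem
    haveI : (MonoidHom.ker (faceMap n J k)).Normal := MonoidHom.normal_ker _
    apply iteratedCommutator_le this
    exact ⟨Rpair n J p, List.mem_map_of_mem hpL, Rpair_le_ker_face n J k p hp⟩

theorem part1 (n : ℕ) (J : Type) :
    Subgroup.map (faceMap (n + 1) J 0)
        (⨅ k : Fin (n + 1), MonoidHom.ker (faceMap (n + 1) J k.succ)) =
      (⨅ k : Fin (n + 1), MonoidHom.ker (faceMap n J k)) := by
  apply le_antisymm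
  · rintro x hx
    rw [Subgroup.mem_map] at hx
    obtain ⟨w, hw, rfl⟩ := hx
    rw [Subgroup.mem_iInf]
    intro k
    rw [MonoidHom.mem_ker, face_face n J k w,
      MonoidHom.mem_ker.mp (Subgroup.mem_iInf.mp hw k), map_one]
  · intro z hz
    rw [Subgroup.mem_map]
    refine ⟨secHom (n + 1) J 1 z, ?_, ?_⟩
    · rw [Subgroup.mem_iInf]
      intro k
      rw [MonoidHom.mem_ker, face_sec_comm n J k z,
        MonoidHom.mem_ker.mp (Subgroup.mem_iInf.mp hz k), map_one]
    · have h := face_sec (n + 1) J 0 z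
      simpa using h

end Good

/-- The image under `d₀ : G_{n+1}^{*J} → G_n^{*J}` of the Moore chain subgroup
`⋂_{k=1}^{n+1} ker(d_k)` equals the Moore cycle subgroup `⋂_{k=0}^{n} ker(d_k)` of `G_n^{*J}`:
every Moore cycle is a Moore boundary, and both equal `R[{1, 2, …, n+1}]`. -/
theorem mooreBoundaries_eq_mooreCycles (n : ℕ) (hn : 1 ≤ n) (J : Type) :
    Subgroup.map (faceMap (n + 1) J 0)
        (⨅ k : Fin (n + 1), MonoidHom.ker (faceMap (n + 1) J k.succ)) =
      (⨅ k : Fin (n + 1), MonoidHom.ker (faceMap n J k)) ∧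
    (⨅ k : Fin (n + 1), MonoidHom.ker (faceMap n J k)) = RT n J (Set.Icc 1 (n + 1)) := by
  exact ⟨part1 n J, part2 n J⟩
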